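/- On (ℂ²_{A₁} ⊗ ℂ²_B) ⊗ (ℂ²_{A₂} ⊗ ℂ²_C), let W = 𝟙⊗𝟙 + 2·𝟙⊗φ⁺ + 2·φ⁺⊗𝟙 − 8·φ⁺⊗φ⁺, where in each tensor slot the first operator acts on A₁B and the second on A₂C, and φ⁺ is the projector onto (|00⟩+|11⟩)/√2. Then for each M ∈ {A, B, C} (with A = A₁A₂) there exist positive semidefinite matrices P_M and Q_M such that W = P_M + Q_M^{Γ_M}, where Γ_M denotes partial transposition with respect to the qubit factors held by M. (Consequently W is a fully decomposable genuine-multipartite-entanglement witness for the tripartition A|B|C.) -/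

import Mathlib

open scoped BigOperators ComplexOrder

noncomputable section

/-- Projector onto the `d`-dimensional maximally entangled state
`|φ⁺_d⟩ = (1/√d) ∑ᵢ |ii⟩`, as a matrix on `ℂ^d ⊗ ℂ^d`. -/
def phiPlus (d : ℕ) : Matrix (Fin d × Fin d) (Fin d × Fin d) ℂ :=
  fun x y => if x.1 = x.2 ∧ y.1 = y.2 then (1 / (d : ℂ)) else 0

/-- The `d`-dimensional isotropic state with visibility `p`:
`ρ(p) = p φ⁺_d + (1-p) 𝟙/d²`. -/
def iso (d : ℕ) (p : ℝ) : Matrix (Fin d × Fin d) (Fin d × Fin d) ℂ :=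
  (p : ℂ) • phiPlus d +
    (((1 - p) / (d : ℝ) ^ 2 : ℝ) : ℂ) • (1 : Matrix (Fin d × Fin d) (Fin d × Fin d) ℂ)

/-- The (possibly unnormalized) projector `|ψ⟩⟨ψ|` onto a vector `ψ`. -/
def vecProj {ι : Type} (ψ : ι → ℂ) : Matrix ι ι ℂ :=
  fun i j => ψ i * (starRingEnd ℂ) (ψ j)

/-- `m₁ ⊗ m₂` on the four-qubit space, the first factor acting on qubits `0, 1`
(i.e. `A₁B`) and the second on qubits `2, 3` (i.e. `A₂C`). -/
def sl (m₁ m₂ : Matrix (Fin 2 × Fin 2) (Fin 2 × Fin 2) ℂ) :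
    Matrix (Fin 4 → Fin 2) (Fin 4 → Fin 2) ℂ :=
  fun x y => m₁ (x 0, x 1) (y 0, y 1) * m₂ (x 2, x 3) (y 2, y 3)

/-- Partial transposition with respect to the qubits in `S`. -/
def ptr {n : ℕ} (S : Finset (Fin n))
    (X : Matrix (Fin n → Fin 2) (Fin n → Fin 2) ℂ) :
    Matrix (Fin n → Fin 2) (Fin n → Fin 2) ℂ :=
  fun x y => X (fun c => if c ∈ S then y c else x c) (fun c => if c ∈ S then x c else y c)

/-- The GME witness `W = 𝟙⊗𝟙 + 2 𝟙⊗φ⁺ + 2 φ⁺⊗𝟙 − 8 φ⁺⊗φ⁺` on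
`ℂ²_{A₁} ⊗ ℂ²_B ⊗ ℂ²_{A₂} ⊗ ℂ²_C` (qubits `0,1,2,3` = `A₁,B,A₂,C`). -/
noncomputable def Wstar : Matrix (Fin 4 → Fin 2) (Fin 4 → Fin 2) ℂ :=
  sl 1 1 + (2 : ℂ) • sl 1 (phiPlus 2) + (2 : ℂ) • sl (phiPlus 2) 1
    - (8 : ℂ) • sl (phiPlus 2) (phiPlus 2)

namespace WstarAux

open Matrix

abbrev I4 : Type := Fin 4 → Fin 2

/-- Integer prototype of `2 • phiPlus 2`. -/
def phiZ : Matrix (Fin 2 × Fin 2) (Fin 2 × Fin 2) ℤ :=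
  fun x y => if x.1 = x.2 ∧ y.1 = y.2 then 1 else 0

def slZ (m₁ m₂ : Matrix (Fin 2 × Fin 2) (Fin 2 × Fin 2) ℤ) : Matrix I4 I4 ℤ :=
  fun x y => m₁ (x 0, x 1) (y 0, y 1) * m₂ (x 2, x 3) (y 2, y 3)

def ptrZ (S : Finset (Fin 4)) (X : Matrix I4 I4 ℤ) : Matrix I4 I4 ℤ :=
  fun x y => X (fun c => if c ∈ S then y c else x c) (fun c => if c ∈ S then x c else y c)

/-- `c • |ψ⟩⟨ψ|` over ℤ, for a rational vector with integer entries. -/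
def term (c : ℤ) (ψ : I4 → ℤ) : Matrix I4 I4 ℤ := fun i j => c * (ψ i * ψ j)

/-- Cast an integer matrix to `ℂ`, dividing by the global scale factor `4`. -/
def cm (M : Matrix I4 I4 ℤ) : Matrix I4 I4 ℂ := fun i j => ((M i j : ℤ) : ℂ) / 4

/- basic two-qubit vectors over ℤ -/
def e00 : Fin 2 × Fin 2 → ℤ := fun p => if p = (0, 0) then 1 else 0
def e01 : Fin 2 × Fin 2 → ℤ := fun p => if p = (0, 1) then 1 else 0
def e10 : Fin 2 × Fin 2 → ℤ := fun p => if p = (1, 0) then 1 else 0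
def e11 : Fin 2 × Fin 2 → ℤ := fun p => if p = (1, 1) then 1 else 0
def pl : Fin 2 × Fin 2 → ℤ := fun p => if p.1 = p.2 then 1 else 0
def mi : Fin 2 × Fin 2 → ℤ := fun p => if p = (0, 0) then 1 else if p = (1, 1) then -1 else 0
def sp : Fin 2 × Fin 2 → ℤ := fun p => if p = (0, 1) then 1 else if p = (1, 0) then 1 else 0
def sm : Fin 2 × Fin 2 → ℤ := fun p => if p = (0, 1) then 1 else if p = (1, 0) then -1 else 0

def tp (u v : Fin 2 × Fin 2 → ℤ) : I4 → ℤ := fun x => u (x 0, x 1) * v (x 2, x 3)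

/-- `4 • W` as an integer matrix. -/
def WZ : Matrix I4 I4 ℤ :=
  (4 : ℤ) • slZ 1 1 + (4 : ℤ) • slZ 1 phiZ + (4 : ℤ) • slZ phiZ 1 - (8 : ℤ) • slZ phiZ phiZ

def PAz : Matrix I4 I4 ℤ :=
  term 4 (tp e01 pl) + term 4 (tp e10 pl) + term 2 (tp mi pl)
    + term 4 (tp pl e01) + term 4 (tp pl e10) + term 2 (tp pl mi)

def QAz : Matrix I4 I4 ℤ :=
  term 4 (tp e00 sm) + term 4 (tp e11 sm) + term 2 (tp sp sm)
    + term 4 (tp sm e00) + term 4 (tp sm e11) + term 2 (tp sm sp)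

def QBz : Matrix I4 I4 ℤ :=
  term 8 (tp e00 e01) + term 8 (tp e00 e10) + term 4 (tp e00 mi)
    + term 8 (tp e11 e01) + term 8 (tp e11 e10) + term 4 (tp e11 mi)
    + term 4 (tp sp e01) + term 4 (tp sp e10) + term 2 (tp sp mi)
    + term 6 (tp sm pl)

def QCz : Matrix I4 I4 ℤ :=
  term 8 (tp e01 e00) + term 8 (tp e10 e00) + term 4 (tp mi e00)
    + term 8 (tp e01 e11) + term 8 (tp e10 e11) + term 4 (tp mi e11)
    + term 4 (tp e01 sp) + term 4 (tp e10 sp) + term 2 (tp mi sp)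
    + term 6 (tp pl sm)

lemma cm_add (A B : Matrix I4 I4 ℤ) : cm (A + B) = cm A + cm B := by
  ext i j
  simp [cm, Matrix.add_apply]
  ring

lemma cm_ptr (S : Finset (Fin 4)) (X : Matrix I4 I4 ℤ) :
    ptr S (cm X) = cm (ptrZ S X) := rfl

lemma Wstar_cm : Wstar = cm WZ := by
  ext x y
  simp only [Wstar, WZ, cm, Matrix.add_apply, Matrix.sub_apply, Matrix.smul_apply,
    smul_eq_mul, sl, slZ, phiPlus, phiZ, Matrix.one_apply]
  push_cast [apply_ite (fun q : ℤ => (q : ℂ))]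
  split_ifs <;> norm_num <;> ring

lemma vecProj_psd (v : I4 → ℂ) : (vecProj v).PosSemidef := by
  have h : vecProj v = Matrix.replicateCol Unit v * (Matrix.replicateCol Unit v)ᴴ := by
    ext i j
    simp [vecProj, Matrix.mul_apply, Matrix.replicateCol, Matrix.conjTranspose_apply]
  rw [h]
  exact Matrix.posSemidef_self_mul_conjTranspose _

lemma smul_psd (r : ℝ) (hr : 0 ≤ r) {M : Matrix I4 I4 ℂ} (h : M.PosSemidef) :
    (((r : ℝ) : ℂ) • M).PosSemidef := by
  constructor
  · show (((r : ℝ) : ℂ) • M)ᴴ = ((r : ℝ) : ℂ) • M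
    rw [Matrix.conjTranspose_smul, h.1]
    congr 1
    exact Complex.conj_ofReal r
  · intro x
    have e : (x.sum fun i xi => x.sum fun j xj => star xi * (((r : ℝ) : ℂ) • M) i j * xj) =
        ((r : ℝ) : ℂ) * x.sum fun i xi => x.sum fun j xj => star xi * M i j * xj := by
      simp only [Finsupp.sum, Finset.mul_sum, Matrix.smul_apply, smul_eq_mul]
      exact Finset.sum_congr rfl fun _ _ => Finset.sum_congr rfl fun _ _ => by ring
    rw [e]
    exact mul_nonneg (Complex.zero_le_real.mpr hr) (h.2 x)

lemma psd_term (c : ℤ) (hc : 0 ≤ c) (v : I4 → ℤ) : (cm (term c v)).PosSemidef := by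
  have h : cm (term c v) = (((c / 4 : ℝ) : ℝ) : ℂ) • vecProj (fun i => ((v i : ℤ) : ℂ)) := by
    ext i j
    simp [cm, term, vecProj, Matrix.smul_apply, map_intCast]
    push_cast
    ring
  rw [h]
  exact smul_psd _ (by positivity) (vecProj_psd _)

end WstarAux

set_option maxHeartbeats 2000000 in
open WstarAux in
/-- For each party `M ∈ {A, B, C}` (with `A` holding qubits `0, 2`, `B` qubit `1`, and
`C` qubit `3`) there are positive semidefinite `P_M, Q_M` with `W = P_M + Q_M^{Γ_M}`;
hence `W` is a fully decomposable GME witness for the tripartition `A|B|C`. -/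
theorem Wstar_fully_decomposable :
    (∃ P Q : Matrix (Fin 4 → Fin 2) (Fin 4 → Fin 2) ℂ,
        P.PosSemidef ∧ Q.PosSemidef ∧ Wstar = P + ptr {0, 2} Q) ∧
    (∃ P Q : Matrix (Fin 4 → Fin 2) (Fin 4 → Fin 2) ℂ,
        P.PosSemidef ∧ Q.PosSemidef ∧ Wstar = P + ptr {1} Q) ∧
    (∃ P Q : Matrix (Fin 4 → Fin 2) (Fin 4 → Fin 2) ℂ,
        P.PosSemidef ∧ Q.PosSemidef ∧ Wstar = P + ptr {3} Q) := by
  refine ⟨⟨cm PAz, cm QAz, ?_, ?_, ?_⟩,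
          ⟨0, cm QBz, Matrix.PosSemidef.zero, ?_, ?_⟩,
          ⟨0, cm QCz, Matrix.PosSemidef.zero, ?_, ?_⟩⟩
  · simp only [PAz, cm_add]
    repeat' refine Matrix.PosSemidef.add ?_ ?_
    all_goals exact psd_term _ (by norm_num) _
  · simp only [QAz, cm_add]
    repeat' refine Matrix.PosSemidef.add ?_ ?_
    all_goals exact psd_term _ (by norm_num) _
  · rw [Wstar_cm, cm_ptr, ← cm_add]
    exact congrArg cm (by decide)
  · simp only [QBz, cm_add]
    repeat' refine Matrix.PosSemidef.add ?_ ?_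
    all_goals exact psd_term _ (by norm_num) _
  · rw [zero_add, Wstar_cm, cm_ptr]
    exact congrArg cm (by decide)
  · simp only [QCz, cm_add]
    repeat' refine Matrix.PosSemidef.add ?_ ?_
    all_goals exact psd_term _ (by norm_num) _
  · rw [zero_add, Wstar_cm, cm_ptr]
    exact congrArg cm (by decide)
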